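/- Let d, k, n be positive integers with k < d and n ≥ 2, let c > 0 be a real number, and set β = n^{−2c/k}/e, which satisfies β < 1. Let V = (V₁, …, V_d) have i.i.d. standard Gaussian N(0,1) entries and let L = (V₁² + ⋯ + V_k²)/(V₁² + ⋯ + V_d²). Then Pr[L ≤ βk/d] ≤ n^{−c}. -/

import Mathlib

open MeasureTheory ProbabilityTheory Real

lemma aux_gauss_exp_sq {t : ℝ} (ht : t < 1/2) :
    Integrable (fun x => Real.exp (t * x ^ 2)) (gaussianReal 0 1) ∧
    ∫ x, Real.exp (t * x ^ 2) ∂(gaussianReal 0 1) = (Real.sqrt (1 - 2 * t))⁻¹ := by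
  set b : ℝ := 1/2 - t with hb_def
  have hb : 0 < b := by simp [hb_def]; linarith
  have hmeas : Measurable fun x : ℝ => (gaussianPDFReal 0 1 x).toNNReal :=
    (measurable_gaussianPDFReal 0 1).real_toNNReal
  have hpdf : ∀ x : ℝ, (gaussianPDFReal 0 1 x).toNNReal • Real.exp (t * x ^ 2)
      = (Real.sqrt (2 * π))⁻¹ * Real.exp (-b * x ^ 2) := by
    intro x
    rw [NNReal.smul_def, Real.coe_toNNReal _ (gaussianPDFReal_nonneg 0 1 x)]
    unfold gaussianPDFReal
    push_cast
    rw [smul_eq_mul, mul_assoc, ← Real.exp_add]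
    ring_nf
    rw [hb_def]; ring_nf
  have hgauss : gaussianReal 0 1
      = MeasureTheory.Measure.withDensity volume
          (fun x => ((gaussianPDFReal 0 1 x).toNNReal : ENNReal)) := by
    rw [gaussianReal_of_var_ne_zero 0 one_ne_zero]
    rfl
  have hint0 : Integrable (fun x : ℝ => (Real.sqrt (2 * π))⁻¹ * Real.exp (-b * x ^ 2)) volume :=
    (integrable_exp_neg_mul_sq hb).const_mul _
  constructor
  · rw [hgauss, integrable_withDensity_iff_integrable_smul hmeas]
    exact hint0.congr (Filter.Eventually.of_forall fun x => (hpdf x).symm)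
  · rw [hgauss, integral_withDensity_eq_integral_smul hmeas]
    simp_rw [hpdf]
    rw [integral_const_mul, integral_gaussian]
    have h2b : 1 - 2 * t = 2 * b := by rw [hb_def]; ring
    rw [h2b]
    rw [show π / b = (2 * π) / (2 * b) by field_simp]
    rw [Real.sqrt_div (by positivity : (0:ℝ) ≤ 2 * π)]
    have h1 : Real.sqrt (2 * π) ≠ 0 := by positivity
    field_simp

lemma aux_pi_integral {d : ℕ} (f : Fin d → ℝ → ℝ)
    (hf : ∀ i, Integrable (f i) (gaussianReal 0 1)) :
    Integrable (fun v : Fin d → ℝ => ∏ i, f i (v i))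
      (Measure.pi fun _ : Fin d => gaussianReal 0 1) ∧
    ∫ v, (∏ i, f i (v i)) ∂(Measure.pi fun _ : Fin d => gaussianReal 0 1)
      = ∏ i, ∫ x, f i x ∂(gaussianReal 0 1) := by
  letI : MeasureSpace ℝ := ⟨gaussianReal 0 1⟩
  haveI : SigmaFinite (volume : Measure ℝ) := by
    show SigmaFinite (gaussianReal 0 1); infer_instance
  constructor
  · exact Integrable.fintype_prod (f := f) hf
  · exact integral_fintype_prod_eq_prod f

set_option maxHeartbeats 1000000 in
theorem stmt7 (d k n : ℕ) (hk : 0 < k) (hkd : k < d) (hn : 2 ≤ n)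
    (c : ℝ) (hc : 0 < c)
    (β : ℝ) (hβ : β = (n : ℝ) ^ (-(2 * c) / (k : ℝ)) / Real.exp 1) :
    β < 1 ∧
    (Measure.pi fun _ : Fin d => gaussianReal 0 1)
        {v : Fin d → ℝ |
          (∑ i : Fin d, if (i : ℕ) < k then v i ^ 2 else 0) / (∑ i : Fin d, v i ^ 2)
            ≤ β * k / d}
      ≤ ENNReal.ofReal ((n : ℝ) ^ (-c)) := by
  have hn1 : (1:ℝ) < n := by exact_mod_cast Nat.lt_of_lt_of_le one_lt_two hn
  have hk0 : (0:ℝ) < k := by exact_mod_cast hk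
  have hd0 : (0:ℝ) < d := by exact_mod_cast hk.trans hkd
  have hdk : (k:ℝ) < d := by exact_mod_cast hkd
  have he1 : (1:ℝ) < Real.exp 1 := by
    have := Real.add_one_le_exp (1:ℝ); linarith
  have hr1 : (n:ℝ) ^ (-(2 * c) / (k : ℝ)) ≤ 1 :=
    Real.rpow_le_one_of_one_le_of_nonpos hn1.le
      (div_nonpos_of_nonpos_of_nonneg (by linarith) hk0.le)
  have hβ0 : 0 < β := by
    rw [hβ]; positivity
  have hβ1 : β < 1 := by
    rw [hβ]
    calc (n:ℝ) ^ (-(2 * c) / (k : ℝ)) / Real.exp 1 ≤ 1 / Real.exp 1 :=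
          (div_le_div_iff_of_pos_right (by positivity)).2 hr1
      _ < 1 := by rw [div_lt_one (by positivity)]; exact he1
  refine ⟨hβ1, ?_⟩
  -- notation
  set μ := Measure.pi fun _ : Fin d => gaussianReal 0 1 with hμ
  set a : ℝ := β * k / d with ha_def
  have ha0 : 0 < a := by positivity
  have hβkd : β * k < d := by nlinarith
  have ha1 : a < 1 := by rw [ha_def, div_lt_one hd0]; exact hβkd
  set u : ℝ := (1 / β - 1) / (1 - a) with hu_def
  have hu0 : 0 ≤ u := by
    apply div_nonneg ?_ (by linarith)
    have : 1 ≤ 1 / β := by rw [le_div_iff₀ hβ0]; linarith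
    linarith
  set G : ℝ := ((d:ℝ) - β * k) / ((d:ℝ) - k) with hG_def
  have hG0 : 0 < G := div_pos (by linarith) (by linarith)
  have hdβk : ((d:ℝ) - β * k) ≠ 0 := by linarith
  have hua : u * a = (1 - β) * k / ((d:ℝ) - β * k) := by
    have h1a : 1 - a = ((d:ℝ) - β * k) / d := by rw [ha_def]; field_simp
    rw [hu_def, h1a, ha_def]
    field_simp
  have hua1 : u * a < 1 := by
    rw [hua, div_lt_one (by linarith)]
    nlinarith
  set t : Fin d → ℝ := fun i => if (i:ℕ) < k then -(u/2) * (1-a) else (u/2) * a with ht_def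
  have ht_lt : ∀ i, t i < 1/2 := by
    intro i
    rw [ht_def]
    by_cases h : (i:ℕ) < k <;> simp only [h, if_true, if_false]
    · nlinarith
    · nlinarith
  -- per-coordinate integrals
  have hint : ∀ i, Integrable (fun x => Real.exp (t i * x ^ 2)) (gaussianReal 0 1) :=
    fun i => (aux_gauss_exp_sq (ht_lt i)).1
  have hval : ∀ i : Fin d, ∫ x, Real.exp (t i * x ^ 2) ∂(gaussianReal 0 1)
      = if (i:ℕ) < k then Real.sqrt β else Real.sqrt G := by
    intro i
    rw [(aux_gauss_exp_sq (ht_lt i)).2]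
    by_cases h : (i:ℕ) < k <;> simp only [ht_def, h, if_true, if_false]
    · have : 1 - 2 * (-(u/2) * (1-a)) = 1 / β := by
        have hu1a : u * (1 - a) = 1 / β - 1 := by
          rw [hu_def]; field_simp [sub_ne_zero.2 ha1.ne']
        nlinarith [hu1a]
      rw [this, one_div, Real.sqrt_inv, inv_inv]
    · have : 1 - 2 * (u/2 * a) = G⁻¹ := by
        have : 1 - u * a = ((d:ℝ) - k) / ((d:ℝ) - β * k) := by
          rw [hua]; field_simp; ring
        rw [hG_def, inv_div]
        linarith [this]
      rw [this, Real.sqrt_inv, inv_inv]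
  -- the product function
  set F : (Fin d → ℝ) → ℝ := fun v => ∏ i, Real.exp (t i * v i ^ 2) with hF_def
  have hF_nonneg : ∀ v, 0 ≤ F v := fun v => Finset.prod_nonneg fun i _ => (Real.exp_pos _).le
  obtain ⟨hFint, hFval⟩ := aux_pi_integral (fun i x => Real.exp (t i * x ^ 2)) hint
  -- inclusion into the Markov event
  have hsub : {v : Fin d → ℝ |
      (∑ i : Fin d, if (i : ℕ) < k then v i ^ 2 else 0) / (∑ i : Fin d, v i ^ 2)
        ≤ β * k / d} ⊆ {v : Fin d → ℝ | 1 ≤ F v} := by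
    intro v hv
    simp only [Set.mem_setOf_eq] at hv ⊢
    set f : ℝ := ∑ i : Fin d, if (i : ℕ) < k then v i ^ 2 else 0 with hf_def
    set g : ℝ := ∑ i : Fin d, v i ^ 2 with hg_def
    have hf0 : 0 ≤ f := Finset.sum_nonneg fun i _ => by positivity
    have hg0 : 0 ≤ g := Finset.sum_nonneg fun i _ => by positivity
    have hfg : f ≤ g := Finset.sum_le_sum fun i _ => by
      by_cases h : (i:ℕ) < k <;> simp [h] <;> positivity
    have hfag : f ≤ a * g := by
      rcases eq_or_lt_of_le hg0 with hg | hg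
      · nlinarith
      · rw [div_le_iff₀ hg] at hv
        rw [ha_def]; linarith [hv]
    have hsum : ∑ i, t i * v i ^ 2 = (u/2) * (a * g) - (u/2) * f := by
      rw [hf_def, hg_def]
      calc ∑ i, t i * v i ^ 2
          = ∑ i : Fin d, ((u/2) * (a * v i ^ 2)
              - (u/2) * (if (i:ℕ) < k then v i ^ 2 else 0)) :=
            Finset.sum_congr rfl fun i _ => by
              by_cases h : (i:ℕ) < k <;> simp only [ht_def, h, if_true, if_false] <;> ring
        _ = (u/2) * (a * ∑ i : Fin d, v i ^ 2)
              - (u/2) * ∑ i : Fin d, (if (i:ℕ) < k then v i ^ 2 else 0) := by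
            rw [Finset.sum_sub_distrib, ← Finset.mul_sum, ← Finset.mul_sum, ← Finset.mul_sum]
    have h0sum : 0 ≤ ∑ i, t i * v i ^ 2 := by rw [hsum]; nlinarith
    show (1:ℝ) ≤ ∏ i, Real.exp (t i * v i ^ 2)
    rw [← Real.exp_sum]
    exact Real.one_le_exp h0sum
  -- Markov
  haveI : IsProbabilityMeasure μ := by rw [hμ]; infer_instance
  have hmarkov : (μ {v | 1 ≤ F v}).toReal ≤ ∫ v, F v ∂μ := by
    have := mul_meas_ge_le_integral_of_nonneg
      (Filter.Eventually.of_forall hF_nonneg) hFint 1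
    simp only [one_mul] at this; exact this
  -- compute the integral
  have hprodval : ∫ v, F v ∂μ = Real.sqrt β ^ k * Real.sqrt G ^ (d - k) := by
    have h1 : ∫ v, F v ∂μ
        = ∏ i : Fin d, ∫ x, Real.exp (t i * x ^ 2) ∂(gaussianReal 0 1) := hFval
    rw [h1]
    calc ∏ i : Fin d, ∫ x, Real.exp (t i * x ^ 2) ∂(gaussianReal 0 1)
        = ∏ i : Fin d, (if (i:ℕ) < k then Real.sqrt β else Real.sqrt G) :=
          Finset.prod_congr rfl fun i _ => hval i
      _ = ∏ i ∈ Finset.range d, (if i < k then Real.sqrt β else Real.sqrt G) :=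
          Fin.prod_univ_eq_prod_range (fun m => if m < k then Real.sqrt β else Real.sqrt G) d
      _ = Real.sqrt β ^ k * Real.sqrt G ^ (d - k) := by
          rw [Finset.range_eq_Ico, ← Finset.prod_Ico_consecutive _ (Nat.zero_le k) hkd.le]
          congr 1
          · rw [← Finset.range_eq_Ico, Finset.prod_congr rfl
              (fun i hi => if_pos (Finset.mem_range.1 hi)), Finset.prod_const,
              Finset.card_range]
          · rw [Finset.prod_congr rfl
              (fun i hi => if_neg (by simp [Finset.mem_Ico] at hi; omega)),
              Finset.prod_const, Nat.card_Ico]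
  -- final real bound
  have hfinal : Real.sqrt β ^ k * Real.sqrt G ^ (d - k) ≤ (n:ℝ) ^ (-c) := by
    have hn0 : (0:ℝ) ≤ n := by positivity
    have hN0 : (0:ℝ) < (n:ℝ) ^ (-c) := Real.rpow_pos_of_pos (by linarith) _
    rw [← pow_le_pow_iff_left₀ (by positivity) hN0.le (two_ne_zero)]
    have hsq : (Real.sqrt β ^ k * Real.sqrt G ^ (d - k)) ^ 2 = β ^ k * G ^ (d - k) := by
      rw [mul_pow, ← pow_mul, ← pow_mul, mul_comm k 2, mul_comm (d-k) 2, pow_mul, pow_mul,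
        Real.sq_sqrt hβ0.le, Real.sq_sqrt hG0.le]
    rw [hsq]
    have hrhs : ((n:ℝ) ^ (-c)) ^ 2 = (n:ℝ) ^ (-(2*c)) := by
      rw [← Real.rpow_natCast ((n:ℝ) ^ (-c)) 2, ← Real.rpow_mul hn0]
      norm_num
      ring_nf
    have hβk : β ^ k = (n:ℝ) ^ (-(2*c)) / Real.exp 1 ^ k := by
      rw [hβ, div_pow, ← Real.rpow_natCast ((n:ℝ) ^ (-(2*c)/(k:ℝ))) k, ← Real.rpow_mul hn0]
      congr 2
      field_simp
    have hGle : G ≤ Real.exp ((k:ℝ)/((d:ℝ)-k)) := by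
      have h2 : (k:ℝ)/((d:ℝ)-k) + 1 ≤ Real.exp ((k:ℝ)/((d:ℝ)-k)) := Real.add_one_le_exp _
      have h3 : G ≤ (k:ℝ)/((d:ℝ)-k) + 1 := by
        have he : (k:ℝ)/((d:ℝ)-k) + 1 = (d:ℝ)/((d:ℝ)-k) := by
          field_simp [sub_ne_zero.2 hdk.ne']
          ring
        rw [hG_def, he]
        exact (div_le_div_iff_of_pos_right (by linarith)).2 (by nlinarith)
      linarith
    have hGpow : G ^ (d - k) ≤ Real.exp 1 ^ k := by
      calc G ^ (d - k) ≤ Real.exp ((k:ℝ)/((d:ℝ)-k)) ^ (d - k) :=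
            pow_le_pow_left₀ hG0.le hGle _
        _ = Real.exp (((d - k : ℕ) : ℝ) * ((k:ℝ)/((d:ℝ)-k))) := (Real.exp_nat_mul _ _).symm
        _ = Real.exp 1 ^ k := by
            rw [Nat.cast_sub hkd.le,
              show ((d:ℝ) - (k:ℝ)) * ((k:ℝ)/((d:ℝ)-(k:ℝ))) = ((k:ℕ):ℝ) from by
                field_simp [sub_ne_zero.2 hdk.ne']]
            exact (Real.exp_one_pow k).symm
    calc β ^ k * G ^ (d - k) ≤ β ^ k * Real.exp 1 ^ k :=
          mul_le_mul_of_nonneg_left hGpow (by positivity)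
      _ = (n:ℝ) ^ (-(2*c)) := by
          rw [hβk, div_mul_cancel₀ _ (by positivity : Real.exp 1 ^ k ≠ 0)]
      _ = ((n:ℝ) ^ (-c)) ^ 2 := hrhs.symm
  calc μ {v : Fin d → ℝ |
      (∑ i : Fin d, if (i : ℕ) < k then v i ^ 2 else 0) / (∑ i : Fin d, v i ^ 2)
        ≤ β * k / d}
      ≤ μ {v | 1 ≤ F v} := measure_mono hsub
    _ = ENNReal.ofReal (μ {v | 1 ≤ F v}).toReal :=
        (ENNReal.ofReal_toReal (measure_ne_top μ _)).symm
    _ ≤ ENNReal.ofReal ((n:ℝ) ^ (-c)) := by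
        apply ENNReal.ofReal_le_ofReal
        calc (μ {v | 1 ≤ F v}).toReal ≤ ∫ v, F v ∂μ := hmarkov
          _ = Real.sqrt β ^ k * Real.sqrt G ^ (d - k) := hprodval
          _ ≤ (n:ℝ) ^ (-c) := hfinal
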